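/- arXiv:1107.0417 — 2 statements merged into one kernel-verified Lean document; each statement's English description precedes it below -/
import Mathlib

section
/- Let (M,ρ) be a separable metric space and Q a Borel probability measure on M. For each k, let X_k, X̃_k be i.i.d. random variables in a measurable space 𝕏_k, independent of G_k ∈ 𝔾_k, and let m_k : 𝕏_k × 𝔾_k → M be measurable. If the pair (m_k(X_k,G_k), m_k(X̃_k,G_k)) converges in distribution to Q ⊗ Q as k → ∞, then for every bounded continuous f : M → ℝ, the conditional expectation E[f(m_k(X_k,G_k)) | G_k] converges in probability to ∫ f dQ. -/
open MeasureTheory ProbabilityTheory Filter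

section Aux

lemma hoeffding_aux_integrable {α : Type*} [MeasurableSpace α] (μ : Measure α)
    [IsFiniteMeasure μ] {u : α → ℝ} (hu : AEStronglyMeasurable u μ) {C : ℝ}
    (h : ∀ a, ‖u a‖ ≤ C) : Integrable u μ :=
  ⟨hu, HasFiniteIntegral.of_bounded (Filter.Eventually.of_forall h)⟩

/-- Change of variables for a bounded measurable function of an independent pair. -/
lemma hoeffding_aux_integral_indep_pair {α β Ω : Type*} [MeasurableSpace α]
    [MeasurableSpace β] [MeasurableSpace Ω] {P : Measure Ω} [IsProbabilityMeasure P]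
    {A : Ω → α} {B : Ω → β} (hA : Measurable A) (hB : Measurable B)
    (hAB : IndepFun A B P) {H : α × β → ℝ} (hH : Measurable H) {C : ℝ}
    (hb : ∀ p, ‖H p‖ ≤ C) :
    ∫ ω, H (A ω, B ω) ∂P = ∫ b, ∫ a, H (a, b) ∂(P.map A) ∂(P.map B) := by
  haveI : IsProbabilityMeasure (P.map A) := Measure.isProbabilityMeasure_map hA.aemeasurable
  haveI : IsProbabilityMeasure (P.map B) := Measure.isProbabilityMeasure_map hB.aemeasurable
  have hmap : P.map (fun ω => (A ω, B ω)) = (P.map A).prod (P.map B) :=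
    (ProbabilityTheory.indepFun_iff_map_prod_eq_prod_map_map hA.aemeasurable
      hB.aemeasurable).mp hAB
  have h1 : ∫ ω, H (A ω, B ω) ∂P = ∫ p, H p ∂(P.map (fun ω => (A ω, B ω))) :=
    (integral_map (hA.prodMk hB).aemeasurable hH.aestronglyMeasurable).symm
  rw [h1, hmap,
    integral_prod_symm _ (hoeffding_aux_integrable _ hH.aestronglyMeasurable hb)]

/-- Conditional expectation of a bounded measurable function of an independent pair. -/
lemma hoeffding_aux_condexp {𝕏 𝔾 Ω : Type*} [MeasurableSpace 𝕏] [MeasurableSpace 𝔾]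
    [MeasurableSpace Ω] {P : Measure Ω} [IsProbabilityMeasure P]
    {X : Ω → 𝕏} {G : Ω → 𝔾} (hX : Measurable X) (hG : Measurable G)
    (hXG : IndepFun X G P) {φ : 𝕏 × 𝔾 → ℝ} (hφ : Measurable φ) {C : ℝ}
    (hb : ∀ p, ‖φ p‖ ≤ C) :
    (fun ω => ∫ x, φ (x, G ω) ∂(P.map X))
      =ᵐ[P] P[(fun ω => φ (X ω, G ω)) | MeasurableSpace.comap G inferInstance] := by
  set ν := P.map X with hν
  set μG := P.map G with hμG
  haveI : IsProbabilityMeasure ν := Measure.isProbabilityMeasure_map hX.aemeasurable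
  haveI : IsProbabilityMeasure μG := Measure.isProbabilityMeasure_map hG.aemeasurable
  have hmap : P.map (fun ω => (X ω, G ω)) = ν.prod μG :=
    (ProbabilityTheory.indepFun_iff_map_prod_eq_prod_map_map hX.aemeasurable
      hG.aemeasurable).mp hXG
  have hφsm : StronglyMeasurable φ := hφ.stronglyMeasurable
  set g : 𝔾 → ℝ := fun γ => ∫ x, φ (x, γ) ∂ν with hg
  have hgsm : StronglyMeasurable g := hφsm.integral_prod_left'
  have hgb : ∀ γ, ‖g γ‖ ≤ C := by
    intro γ
    have := norm_integral_le_of_norm_le_const (μ := ν) (f := fun x => φ (x, γ))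
      (Filter.Eventually.of_forall fun x => hb _)
    simpa using this
  have hm : MeasurableSpace.comap G inferInstance ≤ (inferInstance : MeasurableSpace Ω) :=
    hG.comap_le
  haveI : SigmaFinite (P.trim hm) := inferInstance
  refine ae_eq_condExp_of_forall_setIntegral_eq hm ?_ ?_ ?_ ?_
  · exact hoeffding_aux_integrable _
      ((hφ.comp (hX.prodMk hG)).aestronglyMeasurable) (fun ω => hb _)
  · intro s _ _
    exact (hoeffding_aux_integrable _
      ((hgsm.comp_measurable hG).aestronglyMeasurable) (fun ω => hgb _)).integrableOn
  · rintro s ⟨t, ht, rfl⟩ _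
    set H : 𝕏 × 𝔾 → ℝ := (Prod.snd ⁻¹' t).indicator φ with hH
    have hHsm : StronglyMeasurable H := hφsm.indicator (measurable_snd ht)
    have hHb : ∀ p, ‖H p‖ ≤ C :=
      fun p => (norm_indicator_le_norm_self φ p).trans (hb p)
    have hHint : Integrable H (ν.prod μG) :=
      hoeffding_aux_integrable _ hHsm.aestronglyMeasurable hHb
    have hL : ∫ ω in G ⁻¹' t, g (G ω) ∂P = ∫ γ in t, g γ ∂μG :=
      (setIntegral_map ht hgsm.aestronglyMeasurable hG.aemeasurable).symm
    have hR1 : ∫ ω in G ⁻¹' t, φ (X ω, G ω) ∂P = ∫ ω, H (X ω, G ω) ∂P := by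
      rw [← integral_indicator (hG ht)]
      refine integral_congr_ae (Filter.Eventually.of_forall fun ω => ?_)
      by_cases h : G ω ∈ t <;> simp [hH, Set.indicator, h]
    have hR2 : ∫ ω, H (X ω, G ω) ∂P = ∫ p, H p ∂(ν.prod μG) := by
      rw [← hmap]
      exact (integral_map (hX.prodMk hG).aemeasurable hHsm.aestronglyMeasurable).symm
    have hR3 : ∫ p, H p ∂(ν.prod μG) = ∫ γ, t.indicator g γ ∂μG := by
      rw [integral_prod_symm _ hHint]
      refine integral_congr_ae (Filter.Eventually.of_forall fun γ => ?_)
      by_cases h : γ ∈ t <;> simp [hH, Set.indicator, h, hg]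
    have hR4 : ∫ γ, t.indicator g γ ∂μG = ∫ γ in t, g γ ∂μG := integral_indicator ht
    rw [hL, hR1, hR2, hR3, hR4]
  · exact StronglyMeasurable.aestronglyMeasurable
      (hgsm.comp_measurable (Measurable.of_comap_le le_rfl))

end Aux

/-- **Hoeffding's lemma, direction (D2) ⇒ (D1).**
If the pair `(m_k(X_k,G_k), m_k(X̃_k,G_k))` converges in distribution to `Q ⊗ Q`,
then for every bounded continuous `f`, the conditional expectation
`E[f (m_k(X_k,G_k)) | G_k]` converges in probability to `∫ f dQ`. -/
theorem hoeffding_joint_to_conditional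
    {M : Type*} [MetricSpace M] [TopologicalSpace.SeparableSpace M]
    [MeasurableSpace M] [BorelSpace M]
    {Ω : Type*} [MeasurableSpace Ω] {P : Measure Ω} [IsProbabilityMeasure P]
    {𝕏 𝔾 : ℕ → Type*} [∀ k, MeasurableSpace (𝕏 k)] [∀ k, MeasurableSpace (𝔾 k)]
    (X X' : ∀ k, Ω → 𝕏 k) (G : ∀ k, Ω → 𝔾 k)
    (m : ∀ k, 𝕏 k × 𝔾 k → M)
    (hm : ∀ k, Measurable (m k))
    (hX : ∀ k, Measurable (X k)) (hX' : ∀ k, Measurable (X' k))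
    (hG : ∀ k, Measurable (G k))
    (hid : ∀ k, Measure.map (X k) P = Measure.map (X' k) P)
    (hindep : ∀ k, IndepFun (X k) (X' k) P)
    (hindepG : ∀ k, IndepFun (fun ω => (X k ω, X' k ω)) (G k) P)
    (Q : Measure M) [IsProbabilityMeasure Q]
    (hconv : ∀ F : BoundedContinuousFunction (M × M) ℝ,
      Tendsto (fun k => ∫ ω, F (m k (X k ω, G k ω), m k (X' k ω, G k ω)) ∂P) atTop
        (nhds (∫ z, F z ∂(Q.prod Q)))) :
    ∀ f : BoundedContinuousFunction M ℝ,
      TendstoInMeasure P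
        (fun k => P[(fun ω => f (m k (X k ω, G k ω))) |
          MeasurableSpace.comap (G k) inferInstance])
        atTop (fun _ => ∫ x, f x ∂Q) := by
  haveI : SecondCountableTopology M :=
    UniformSpace.secondCountable_of_separable M
  intro f
  set c : ℝ := ∫ x, f x ∂Q with hc
  -- basic data
  have hfm : ∀ k, Measurable (fun p : 𝕏 k × 𝔾 k => f (m k p)) :=
    fun k => f.continuous.measurable.comp (hm k)
  have hfb : ∀ k (p : 𝕏 k × 𝔾 k), ‖f (m k p)‖ ≤ ‖f‖ :=
    fun k p => f.norm_coe_le_norm _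
  have hXG : ∀ k, IndepFun (X k) (G k) P := by
    intro k
    have := (hindepG k).comp measurable_fst measurable_id
    exact this
  -- the candidate conditional expectations
  set g : ∀ k, 𝔾 k → ℝ := fun k γ => ∫ x, f (m k (x, γ)) ∂(P.map (X k)) with hgdef
  set u : ℕ → Ω → ℝ := fun k ω => g k (G k ω) with hudef
  have hgsm : ∀ k, StronglyMeasurable (g k) :=
    fun k => (hfm k).stronglyMeasurable.integral_prod_left'
  have hgb : ∀ k γ, ‖g k γ‖ ≤ ‖f‖ := by
    intro k γ
    haveI : IsProbabilityMeasure (P.map (X k)) :=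
      Measure.isProbabilityMeasure_map (hX k).aemeasurable
    have := norm_integral_le_of_norm_le_const (μ := P.map (X k))
      (f := fun x => f (m k (x, γ))) (Filter.Eventually.of_forall fun x => hfb k _)
    simpa using this
  have husm : ∀ k, AEStronglyMeasurable (u k) P :=
    fun k => ((hgsm k).comp_measurable (hG k)).aestronglyMeasurable
  have hub : ∀ k ω, ‖u k ω‖ ≤ ‖f‖ := fun k ω => hgb k _
  have hu_int : ∀ k, Integrable (u k) P :=
    fun k => hoeffding_aux_integrable _ (husm k) (hub k)
  have huu_int : ∀ k, Integrable (fun ω => u k ω * u k ω) P := by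
    intro k
    refine hoeffding_aux_integrable _ ((husm k).mul (husm k)) (C := ‖f‖ * ‖f‖) ?_
    intro ω
    rw [norm_mul]
    exact mul_le_mul (hub k ω) (hub k ω) (norm_nonneg _) (norm_nonneg _)
  have hcond : ∀ k, (u k) =ᵐ[P] P[(fun ω => f (m k (X k ω, G k ω))) |
      MeasurableSpace.comap (G k) inferInstance] :=
    fun k => hoeffding_aux_condexp (hX k) (hG k) (hXG k) (hfm k) (hfb k)
  -- first and second moments
  set I : ℕ → ℝ := fun k => ∫ ω, f (m k (X k ω, G k ω)) ∂P with hI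
  set J : ℕ → ℝ := fun k =>
    ∫ ω, f (m k (X k ω, G k ω)) * f (m k (X' k ω, G k ω)) ∂P with hJ
  have hIu : ∀ k, I k = ∫ ω, u k ω ∂P := by
    intro k
    have h1 : I k = ∫ γ, g k γ ∂(P.map (G k)) :=
      hoeffding_aux_integral_indep_pair (hX k) (hG k) (hXG k) (hfm k) (hfb k)
    exact h1.trans (integral_map (hG k).aemeasurable (hgsm k).aestronglyMeasurable)
  have hJu : ∀ k, J k = ∫ ω, u k ω * u k ω ∂P := by
    intro k
    have hHm : Measurable (fun q : (𝕏 k × 𝕏 k) × 𝔾 k =>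
        f (m k (q.1.1, q.2)) * f (m k (q.1.2, q.2))) :=
      ((hfm k).comp ((measurable_fst.comp measurable_fst).prodMk measurable_snd)).mul
        ((hfm k).comp ((measurable_snd.comp measurable_fst).prodMk measurable_snd))
    have hHb : ∀ q : (𝕏 k × 𝕏 k) × 𝔾 k,
        ‖f (m k (q.1.1, q.2)) * f (m k (q.1.2, q.2))‖ ≤ ‖f‖ * ‖f‖ := by
      intro q
      rw [norm_mul]
      exact mul_le_mul (hfb k _) (hfb k _) (norm_nonneg _) (norm_nonneg _)
    have h1 : J k = ∫ γ, ∫ p : 𝕏 k × 𝕏 k, f (m k (p.1, γ)) * f (m k (p.2, γ))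
        ∂(P.map (fun ω => (X k ω, X' k ω))) ∂(P.map (G k)) :=
      hoeffding_aux_integral_indep_pair ((hX k).prodMk (hX' k)) (hG k)
        (hindepG k) hHm hHb
    have hpp : P.map (fun ω => (X k ω, X' k ω))
        = (P.map (X k)).prod (P.map (X k)) := by
      rw [(ProbabilityTheory.indepFun_iff_map_prod_eq_prod_map_map (hX k).aemeasurable
        (hX' k).aemeasurable).mp (hindep k), ← hid k]
    rw [hpp] at h1
    have h2 : ∫ γ, ∫ p : 𝕏 k × 𝕏 k, f (m k (p.1, γ)) * f (m k (p.2, γ))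
        ∂((P.map (X k)).prod (P.map (X k))) ∂(P.map (G k))
        = ∫ γ, g k γ * g k γ ∂(P.map (G k)) :=
      integral_congr_ae (Filter.Eventually.of_forall fun γ =>
        integral_prod_mul (fun x => f (m k (x, γ))) (fun x => f (m k (x, γ))))
    have h3 : ∫ γ, g k γ * g k γ ∂(P.map (G k)) = ∫ ω, u k ω * u k ω ∂P :=
      integral_map (hG k).aemeasurable ((hgsm k).mul (hgsm k)).aestronglyMeasurable
    exact h1.trans (h2.trans h3)
  -- convergence of the moments
  have hIc : Tendsto I atTop (nhds c) := by
    have h := hconv (f.compContinuous ⟨Prod.fst, continuous_fst⟩)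
    have hval : ∫ z, (f.compContinuous ⟨Prod.fst, continuous_fst⟩ :
        BoundedContinuousFunction (M × M) ℝ) z ∂(Q.prod Q) = c := by
      have hint : Integrable (fun z : M × M => f z.1) (Q.prod Q) :=
        (f.compContinuous ⟨Prod.fst, continuous_fst⟩).integrable (Q.prod Q)
      calc ∫ z : M × M, f z.1 ∂(Q.prod Q)
          = ∫ x, ∫ _, f x ∂Q ∂Q := integral_prod (fun z : M × M => f z.1) hint
        _ = c := by simp [hc]
    rw [hval] at h
    exact h
  have hJc : Tendsto J atTop (nhds (c * c)) := by
    have h := hconv ((f.compContinuous ⟨Prod.fst, continuous_fst⟩) *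
      (f.compContinuous ⟨Prod.snd, continuous_snd⟩))
    have hval : ∫ z, ((f.compContinuous ⟨Prod.fst, continuous_fst⟩) *
        (f.compContinuous ⟨Prod.snd, continuous_snd⟩) :
        BoundedContinuousFunction (M × M) ℝ) z ∂(Q.prod Q) = c * c := by
      calc ∫ z : M × M, f z.1 * f z.2 ∂(Q.prod Q)
          = (∫ x, f x ∂Q) * ∫ x, f x ∂Q := integral_prod_mul _ _
        _ = c * c := rfl
    rw [hval] at h
    exact h
  -- the second moment of u k - c tends to zero
  set E : ℕ → ℝ := fun k => ∫ ω, (u k ω - c) * (u k ω - c) ∂P with hE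
  have hEeq : ∀ k, E k = J k - 2 * c * I k + c * c := by
    intro k
    have h2int : Integrable (fun ω => 2 * c * u k ω) P := (hu_int k).const_mul _
    have h1 : Integrable (fun ω => u k ω * u k ω - 2 * c * u k ω) P :=
      (huu_int k).sub h2int
    calc E k
        = ∫ ω, (u k ω * u k ω - 2 * c * u k ω + c * c) ∂P :=
          integral_congr_ae (Filter.Eventually.of_forall fun ω => by ring)
      _ = ∫ ω, (u k ω * u k ω - 2 * c * u k ω) ∂P + ∫ _ω, c * c ∂P :=
          integral_add h1 (integrable_const _)
      _ = ((∫ ω, u k ω * u k ω ∂P) - ∫ ω, 2 * c * u k ω ∂P) + ∫ _ω, c * c ∂P :=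
          congrArg (fun r => r + ∫ _ω, c * c ∂P) (integral_sub (huu_int k) h2int)
      _ = J k - 2 * c * I k + c * c := by
          rw [hIu k, hJu k, integral_const_mul, integral_const]
          simp
  have hE0 : Tendsto E atTop (nhds 0) := by
    have h : Tendsto (fun k => J k - 2 * c * I k + c * c) atTop
        (nhds (c * c - 2 * c * c + c * c)) :=
      ((hJc.sub (hIc.const_mul (2 * c))).add tendsto_const_nhds)
    have heq : (fun k => J k - 2 * c * I k + c * c) = E := by
      funext k; rw [hEeq k]
    rw [heq] at h
    convert h using 2
    ring
  -- convergence in measure via L² convergence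
  refine TendstoInMeasure.congr (fun k => hcond k) (Filter.EventuallyEq.rfl) ?_
  refine tendstoInMeasure_of_tendsto_eLpNorm_of_ne_top (p := 2) (by norm_num)
    ENNReal.ofNat_ne_top husm aestronglyMeasurable_const ?_
  have hsnorm : ∀ k, eLpNorm (u k - fun _ => c) 2 P
      = ENNReal.ofReal (E k) ^ (1 / (2 : ℝ)) := by
    intro k
    have hdint : Integrable (fun ω => (u k ω - c) * (u k ω - c)) P := by
      refine hoeffding_aux_integrable _
        (((husm k).sub aestronglyMeasurable_const).mul
          ((husm k).sub aestronglyMeasurable_const))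
        (C := (‖f‖ + |c|) * (‖f‖ + |c|)) ?_
      intro ω
      rw [norm_mul]
      have hd : ‖u k ω - c‖ ≤ ‖f‖ + |c| := by
        calc ‖u k ω - c‖ ≤ ‖u k ω‖ + ‖c‖ := norm_sub_le _ _
          _ ≤ ‖f‖ + |c| := by
            have := hub k ω
            simp only [Real.norm_eq_abs] at *
            linarith
      exact mul_le_mul hd hd (norm_nonneg _) (by positivity)
    have hnn : (0 : Ω → ℝ) ≤ᵐ[P] fun ω => (u k ω - c) * (u k ω - c) :=
      Filter.Eventually.of_forall fun ω => mul_self_nonneg _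
    have hlint : ∫⁻ ω, (‖((u k - fun _ => c : Ω → ℝ)) ω‖₊ : ENNReal) ^ (2 : ℝ) ∂P
        = ENNReal.ofReal (E k) := by
      show _ = ENNReal.ofReal (∫ ω, (u k ω - c) * (u k ω - c) ∂P)
      rw [ofReal_integral_eq_lintegral_ofReal hdint hnn]
      refine lintegral_congr fun ω => ?_
      have h1 : ENNReal.ofReal ((u k ω - c) * (u k ω - c))
          = (‖(u k ω - c) * (u k ω - c)‖₊ : ENNReal) :=
        (Real.enorm_eq_ofReal (mul_self_nonneg _)).symm
      have h2 : ((‖((u k - fun _ => c : Ω → ℝ)) ω‖₊ : ENNReal)) ^ (2 : ℝ)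
          = ((‖u k ω - c‖₊ : ENNReal)) ^ (2 : ℕ) := by
        have h3 : ((2 : ℝ)) = ((2 : ℕ) : ℝ) := by norm_num
        rw [h3, ENNReal.rpow_natCast]
        rfl
      rw [h2, h1, pow_two, ← ENNReal.coe_mul, ← nnnorm_mul]
    rw [eLpNorm_eq_lintegral_rpow_enorm_toReal (by norm_num) ENNReal.ofNat_ne_top]
    rw [show ((2 : ENNReal).toReal) = (2 : ℝ) by simp]
    rw [← hlint]
    rfl
  have hfin : Tendsto (fun k => ENNReal.ofReal (E k) ^ (1 / (2 : ℝ))) atTop (nhds 0) := by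
    have h1 : Tendsto (fun k => ENNReal.ofReal (E k)) atTop (nhds 0) := by
      have := (ENNReal.continuous_ofReal.tendsto 0).comp hE0
      simpa [Function.comp_def] using this
    have h2 := (ENNReal.continuous_rpow_const (y := 1 / (2 : ℝ))).tendsto 0
    have h3 := h2.comp h1
    simpa [ENNReal.zero_rpow_of_pos, Function.comp_def] using h3
  simpa [hsnorm] using hfin
end

section
/- For a sequence of probability measures Q̂_k (possibly random) on a separable metric space converging to a fixed probability measure Q, the following are equivalent: (i) for every bounded continuous f, ∫ f dQ̂_k → ∫ f dQ in probability; (ii) D_BL(Q̂_k, Q) → 0 in probability, where D_BL is the bounded-Lipschitz metric using functions f : M → [-1,1] with Lipschitz constant 1. -/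
open MeasureTheory ProbabilityTheory Filter
open Topology
open scoped NNReal ENNReal BoundedContinuousFunction

/-- The bounded-Lipschitz distance `D_BL` between two measures on a metric space:
supremum over `1`-Lipschitz functions with values in `[-1,1]`. -/
noncomputable def DBL {M : Type*} [MetricSpace M] [MeasurableSpace M]
    (μ ν : Measure M) : ℝ :=
  ⨆ f : {f : M → ℝ // LipschitzWith 1 f ∧ ∀ x, f x ∈ Set.Icc (-1 : ℝ) 1},
    |(∫ x, f.1 x ∂μ) - ∫ x, f.1 x ∂ν|

section DBLaux

open Metric Set TopologicalSpace BoundedContinuousFunction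
open scoped ENNReal NNReal Topology

/-- The index type of `DBL`. -/
abbrev BLF (M : Type*) [MetricSpace M] :=
  {f : M → ℝ // LipschitzWith 1 f ∧ ∀ x, f x ∈ Set.Icc (-1 : ℝ) 1}

variable {M : Type*} [MetricSpace M] [MeasurableSpace M] [OpensMeasurableSpace M]

instance : Nonempty (BLF M) :=
  ⟨⟨fun _ => 0, (LipschitzWith.const (0 : ℝ)).weaken zero_le_one, fun _ => by norm_num⟩⟩

lemma BLF.integrable (f : BLF M) (μ : Measure M) [IsFiniteMeasure μ] :
    MeasureTheory.Integrable f.1 μ := by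
  refine (integrable_const (1 : ℝ)).mono' f.2.1.continuous.aestronglyMeasurable
    (ae_of_all _ fun x => ?_)
  rw [Real.norm_eq_abs, abs_le]
  exact ⟨(f.2.2 x).1, (f.2.2 x).2⟩

variable (μ ν : Measure M) [IsProbabilityMeasure μ] [IsProbabilityMeasure ν]

lemma BLF.abs_integral_le (f : BLF M) : |∫ x, f.1 x ∂μ| ≤ 1 := by
  have h0 : |∫ x, f.1 x ∂μ| ≤ ∫ x, |f.1 x| ∂μ := by
    simpa [Real.norm_eq_abs] using norm_integral_le_integral_norm (μ := μ) f.1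
  calc |∫ x, f.1 x ∂μ| ≤ ∫ x, |f.1 x| ∂μ := h0
    _ ≤ ∫ _x, (1 : ℝ) ∂μ := integral_mono (f.integrable μ).abs (integrable_const 1)
        (fun x => abs_le.mpr ⟨(f.2.2 x).1, (f.2.2 x).2⟩)
    _ = 1 := by simp

lemma DBL_bddAbove :
    BddAbove (Set.range fun f : BLF M => |(∫ x, f.1 x ∂μ) - ∫ x, f.1 x ∂ν|) := by
  refine ⟨2, ?_⟩
  rintro r ⟨f, rfl⟩
  have h1 := abs_le.mp (BLF.abs_integral_le μ f)
  have h2 := abs_le.mp (BLF.abs_integral_le ν f)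
  exact abs_sub_le_iff.mpr ⟨by linarith, by linarith⟩

lemma le_DBL (f : BLF M) : |(∫ x, f.1 x ∂μ) - ∫ x, f.1 x ∂ν| ≤ DBL μ ν :=
  le_ciSup (DBL_bddAbove μ ν) f

lemma DBL_le {c : ℝ} (h : ∀ f : BLF M, |(∫ x, f.1 x ∂μ) - ∫ x, f.1 x ∂ν| ≤ c) :
    DBL μ ν ≤ c :=
  ciSup_le h

lemma DBL_nonneg : 0 ≤ DBL μ ν :=
  le_trans (abs_nonneg _) (le_DBL μ ν (Classical.arbitrary _))

lemma DBL_self_eq_zero : DBL μ μ = 0 :=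
  le_antisymm (DBL_le μ μ fun f => by simp) (DBL_nonneg μ μ)

lemma DBL_comm : DBL μ ν = DBL ν μ := by
  unfold DBL
  congr 1
  funext f
  rw [abs_sub_comm]

lemma DBL_triangle (κ : Measure M) [IsProbabilityMeasure κ] :
    DBL μ κ ≤ DBL μ ν + DBL ν κ := by
  refine DBL_le μ κ fun f => ?_
  have h1 := le_DBL μ ν f
  have h2 := le_DBL ν κ f
  have h3 := abs_sub_le (∫ x, f.1 x ∂μ) (∫ x, f.1 x ∂ν) (∫ x, f.1 x ∂κ)
  linarith

/-- One-sided comparison: integrals of bounded Lipschitz functions differ by at most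
`3` times the Lévy-Prokhorov distance. -/
lemma integral_sub_le_three_mul_LP (g : BLF M) :
    (∫ x, g.1 x ∂μ) - ∫ x, g.1 x ∂ν ≤ 3 * levyProkhorovDist μ ν := by
  set d := levyProkhorovDist μ ν with hd
  have dnn : 0 ≤ d := ENNReal.toReal_nonneg
  have key : ∀ ε : ℝ, d < ε → (∫ x, g.1 x ∂μ) - ∫ x, g.1 x ∂ν ≤ 3 * ε := by
    intro ε hε
    have εpos : 0 < ε := lt_of_le_of_lt dnn hε
    have hLP : levyProkhorovEDist μ ν < ENNReal.ofReal ε := by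
      rw [ENNReal.lt_ofReal_iff_toReal_lt (levyProkhorovEDist_ne_top μ ν)]
      exact hε
    set G : BoundedContinuousFunction M ℝ :=
      BoundedContinuousFunction.mkOfBound ⟨fun x => g.1 x + 1,
        (g.2.1.continuous).add continuous_const⟩ 2 (fun x y => by
          rw [Real.dist_eq]
          have hx := g.2.2 x; have hy := g.2.2 y
          rw [Set.mem_Icc] at hx hy
          rw [abs_le]; constructor <;> simp <;> linarith [hx.1, hx.2, hy.1, hy.2]) with hGdef
    have hGx : ∀ x, G x = g.1 x + 1 := fun x => rfl
    have hG0 : ∀ x, 0 ≤ G x := fun x => by have := (g.2.2 x).1; rw [hGx]; linarith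
    have hG2 : ∀ x, G x ≤ 2 := fun x => by have := (g.2.2 x).2; rw [hGx]; linarith
    have hGnorm : ‖G‖ ≤ 2 := by
      refine (BoundedContinuousFunction.norm_le (by norm_num)).mpr fun x => ?_
      rw [Real.norm_eq_abs, abs_le]
      exact ⟨by linarith [hG0 x], hG2 x⟩
    have bound := BoundedContinuousFunction.integral_le_of_levyProkhorovEDist_lt μ ν εpos hLP G
      (Filter.Eventually.of_forall hG0)
    set b := ‖G‖ with hb
    have bnn : 0 ≤ b := norm_nonneg _
    set F : ℝ → ℝ := fun t => ENNReal.toReal (ν {a | t ≤ G a}) with hF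
    have Fanti : Antitone F := fun s t hst =>
      ENNReal.toReal_mono (measure_ne_top _ _) (measure_mono fun a ha => le_trans hst ha)
    have F0 : ∀ t, 0 ≤ F t := fun t => ENNReal.toReal_nonneg
    have F1 : ∀ t, F t ≤ 1 := fun t => by
      refine le_trans (ENNReal.toReal_mono (measure_ne_top _ _)
        (measure_mono (Set.subset_univ _))) ?_
      simp
    have Fint : ∀ s : Set ℝ, MeasurableSet s → volume s ≠ ⊤ → IntegrableOn F s volume := by
      intro s hs hvol
      apply Measure.integrableOn_of_bounded (M := 1) hvol Fanti.measurable.aestronglyMeasurable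
      exact Filter.Eventually.of_forall fun t => by
        rw [Real.norm_eq_abs, abs_le]; exact ⟨by linarith [F0 t], F1 t⟩
    have FintShift : IntegrableOn (fun t => F (t - ε)) (Set.Ioc 0 b) volume := by
      apply Measure.integrableOn_of_bounded (M := 1) measure_Ioc_lt_top.ne
      · exact (Fanti.measurable.comp (measurable_id.sub measurable_const)).aestronglyMeasurable
      · exact Filter.Eventually.of_forall fun t => by
          rw [Real.norm_eq_abs, abs_le]; exact ⟨by linarith [F0 (t - ε)], F1 (t - ε)⟩
    have Iν : IntegrableOn
        (fun t => ENNReal.toReal (ν (Metric.thickening ε {a | t ≤ G a}))) (Set.Ioc 0 b) volume := by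
      apply Measure.integrableOn_of_bounded (M := 1) measure_Ioc_lt_top.ne
      · apply Measurable.aestronglyMeasurable
        apply Measurable.ennreal_toReal
        apply Antitone.measurable
        intro s t hst
        exact measure_mono <| Metric.thickening_subset_of_subset ε fun a ha => hst.trans ha
      · refine Filter.Eventually.of_forall fun t => ?_
        rw [Real.norm_eq_abs, abs_le]
        constructor
        · linarith [ENNReal.toReal_nonneg (a := ν (Metric.thickening ε {a | t ≤ G a}))]
        · refine le_trans (ENNReal.toReal_mono (measure_ne_top _ _)
            (measure_mono (Set.subset_univ _))) ?_
          simp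
    have step1 : ∀ t, ENNReal.toReal (ν (Metric.thickening ε {a | t ≤ G a})) ≤ F (t - ε) := by
      intro t
      apply ENNReal.toReal_mono (measure_ne_top _ _)
      apply measure_mono
      intro x hx
      rw [Metric.mem_thickening_iff] at hx
      obtain ⟨y, hy, hxy⟩ := hx
      have h1 : t ≤ G y := hy
      have hd2 := g.2.1.dist_le_mul x y
      rw [NNReal.coe_one, one_mul, Real.dist_eq] at hd2
      have h3 : g.1 y - g.1 x ≤ |g.1 x - g.1 y| := by
        rw [abs_sub_comm]; exact le_abs_self _
      show t - ε ≤ G x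
      rw [hGx] at h1 ⊢
      linarith
    have step2 : (∫ t in Set.Ioc 0 b, ENNReal.toReal (ν (Metric.thickening ε {a | t ≤ G a})))
        ≤ ∫ t in Set.Ioc 0 b, F (t - ε) :=
      setIntegral_mono_on Iν FintShift measurableSet_Ioc (fun t _ => step1 t)
    have step3 : (∫ t in Set.Ioc 0 b, F (t - ε)) = ∫ t in Set.Ioc (-ε) (b - ε), F t := by
      have hind : ∀ t : ℝ, (Set.Ioc 0 b).indicator (fun t => F (t - ε)) t
          = (Set.Ioc (-ε) (b - ε)).indicator F (t - ε) := by
        intro t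
        simp only [Set.indicator_apply, Set.mem_Ioc]
        have hiff : (0 < t ∧ t ≤ b) ↔ (-ε < t - ε ∧ t - ε ≤ b - ε) := by
          constructor <;> rintro ⟨u1, u2⟩ <;> constructor <;> linarith
        rw [if_congr hiff rfl rfl]
      calc (∫ t in Set.Ioc 0 b, F (t - ε))
          = ∫ t, (Set.Ioc 0 b).indicator (fun t => F (t - ε)) t :=
            (integral_indicator measurableSet_Ioc).symm
        _ = ∫ t, (Set.Ioc (-ε) (b - ε)).indicator F (t - ε) := by simp_rw [hind]
        _ = ∫ t, (Set.Ioc (-ε) (b - ε)).indicator F t := by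
            exact integral_sub_right_eq_self ((Set.Ioc (-ε) (b - ε)).indicator F) ε
        _ = ∫ t in Set.Ioc (-ε) (b - ε), F t := integral_indicator measurableSet_Ioc
    have step4 : (∫ t in Set.Ioc (-ε) (b - ε), F t)
        ≤ (∫ t in Set.Ioc (-ε) 0, F t) + ∫ t in Set.Ioc 0 b, F t := by
      have hsub : Set.Ioc (-ε) (b - ε) ⊆ Set.Ioc (-ε) 0 ∪ Set.Ioc 0 b := by
        intro t ht
        rcases le_or_gt t 0 with h | h
        · exact Or.inl ⟨ht.1, h⟩
        · exact Or.inr ⟨h, by linarith [ht.2]⟩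
      have hun : IntegrableOn F (Set.Ioc (-ε) 0 ∪ Set.Ioc 0 b) volume := by
        apply IntegrableOn.union (Fint _ measurableSet_Ioc measure_Ioc_lt_top.ne)
          (Fint _ measurableSet_Ioc measure_Ioc_lt_top.ne)
      calc (∫ t in Set.Ioc (-ε) (b - ε), F t)
          ≤ ∫ t in Set.Ioc (-ε) 0 ∪ Set.Ioc 0 b, F t := by
            apply setIntegral_mono_set hun (Filter.Eventually.of_forall fun t => F0 t)
              (HasSubset.Subset.eventuallyLE hsub)
        _ = (∫ t in Set.Ioc (-ε) 0, F t) + ∫ t in Set.Ioc 0 b, F t := by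
            apply setIntegral_union (Set.Ioc_disjoint_Ioc_of_le le_rfl) measurableSet_Ioc
              (Fint _ measurableSet_Ioc measure_Ioc_lt_top.ne)
              (Fint _ measurableSet_Ioc measure_Ioc_lt_top.ne)
    have step5 : (∫ t in Set.Ioc (-ε) 0, F t) ≤ ε := by
      calc (∫ t in Set.Ioc (-ε) 0, F t) ≤ ∫ _t in Set.Ioc (-ε) 0, (1 : ℝ) :=
          setIntegral_mono_on (Fint _ measurableSet_Ioc measure_Ioc_lt_top.ne)
            (integrableOn_const measure_Ioc_lt_top.ne) measurableSet_Ioc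
            (fun t _ => F1 t)
        _ = ε := by
          rw [setIntegral_const, Real.volume_real_Ioc]
          rw [max_eq_left (by linarith)]
          simp
    have step6 : (∫ t in Set.Ioc 0 b, F t) = ∫ x, G x ∂ν := by
      rw [BoundedContinuousFunction.integral_eq_integral_meas_le G ν
        (Filter.Eventually.of_forall hG0)]
      rfl
    have intGμ : ∫ x, G x ∂μ = (∫ x, g.1 x ∂μ) + 1 := by
      calc ∫ x, G x ∂μ = ∫ x, (g.1 x + 1) ∂μ := rfl
        _ = (∫ x, g.1 x ∂μ) + ∫ _x, (1 : ℝ) ∂μ :=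
            integral_add (BLF.integrable g μ) (integrable_const 1)
        _ = (∫ x, g.1 x ∂μ) + 1 := by simp
    have intGν : ∫ x, G x ∂ν = (∫ x, g.1 x ∂ν) + 1 := by
      calc ∫ x, G x ∂ν = ∫ x, (g.1 x + 1) ∂ν := rfl
        _ = (∫ x, g.1 x ∂ν) + ∫ _x, (1 : ℝ) ∂ν :=
            integral_add (BLF.integrable g ν) (integrable_const 1)
        _ = (∫ x, g.1 x ∂ν) + 1 := by simp
    have hεb : ε * b ≤ ε * 2 := mul_le_mul_of_nonneg_left hGnorm εpos.le
    simp only [measureReal_def] at bound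
    linarith [bound, step2, step3, step4, step5, step6, intGμ, intGν]
  by_contra hcon
  push_neg at hcon
  have h1 : d < (((∫ x, g.1 x ∂μ) - ∫ x, g.1 x ∂ν) / 3 + d) / 2 := by linarith
  have h2 := key _ h1
  linarith

/-- `DBL` is bounded by `3` times the Lévy-Prokhorov distance. -/
lemma DBL_le_three_mul_LP : DBL μ ν ≤ 3 * levyProkhorovDist μ ν := by
  refine DBL_le μ ν fun f => ?_
  rw [abs_sub_le_iff]
  refine ⟨integral_sub_le_three_mul_LP μ ν f, ?_⟩
  rw [levyProkhorovDist_comm]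
  exact integral_sub_le_three_mul_LP ν μ f

/-- Conversely, if `DBL` is small then so is the Lévy-Prokhorov distance. -/
lemma LP_le_of_DBL_lt {δ : ℝ} (hδ0 : 0 < δ) (hδ1 : δ ≤ 1) (hD : DBL μ ν < δ * δ) :
    levyProkhorovDist μ ν ≤ δ := by
  apply levyProkhorovDist_le_of_forall_le μ ν hδ0.le
  intro ε B hδε hB
  have εpos : 0 < ε := hδ0.trans hδε
  rcases le_or_gt ε 1 with hε1 | hε1
  swap
  · calc μ B ≤ 1 := prob_le_one
      _ ≤ ENNReal.ofReal ε := by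
          rw [← ENNReal.ofReal_one]; exact ENNReal.ofReal_le_ofReal hε1.le
      _ ≤ _ := le_add_self
  rcases Set.eq_empty_or_nonempty B with rfl | hBne
  · simp
  set u : M → ℝ := fun x => max (ε - Metric.infDist x B) 0 with hu
  have hLip : LipschitzWith 1 u := by
    apply LipschitzWith.of_dist_le_mul
    intro x y
    rw [NNReal.coe_one, one_mul, Real.dist_eq]
    calc |u x - u y| ≤ |(ε - Metric.infDist x B) - (ε - Metric.infDist y B)| :=
          abs_max_sub_max_le_abs _ _ _
      _ = |Metric.infDist y B - Metric.infDist x B| := by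
          congr 1; ring
      _ = dist (Metric.infDist y B) (Metric.infDist x B) := (Real.dist_eq _ _).symm
      _ ≤ 1 * dist y x := (Metric.lipschitz_infDist_pt B).dist_le_mul y x
      _ = dist x y := by rw [one_mul, dist_comm]
  have hIcc : ∀ x, u x ∈ Set.Icc (-1 : ℝ) 1 := by
    intro x
    constructor
    · have := le_max_right (ε - Metric.infDist x B) 0; linarith
    · apply max_le ?_ (by norm_num)
      have := Metric.infDist_nonneg (s := B) (x := x)
      linarith
  set f : BLF M := ⟨u, hLip, hIcc⟩ with hf
  have hDf : (∫ x, u x ∂μ) - ∫ x, u x ∂ν ≤ DBL μ ν :=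
    le_trans (le_abs_self _) (le_DBL μ ν f)
  have hlow : ε * (μ B).toReal ≤ ∫ x, u x ∂μ := by
    have h1 : ∫ x in B, ε ∂μ ≤ ∫ x in B, u x ∂μ := by
      apply setIntegral_mono_on (integrableOn_const (measure_lt_top μ B).ne)
        ((BLF.integrable f μ).integrableOn) hB
      intro x hx
      show ε ≤ max (ε - Metric.infDist x B) 0
      rw [Metric.infDist_zero_of_mem hx, sub_zero]
      exact le_max_left _ _
    have h2 : ∫ x in B, u x ∂μ ≤ ∫ x, u x ∂μ :=
      setIntegral_le_integral (BLF.integrable f μ)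
        (Filter.Eventually.of_forall fun x => le_max_right _ _)
    have h3 : ∫ _x in B, ε ∂μ = (μ B).toReal * ε := by
      rw [setIntegral_const, smul_eq_mul, measureReal_def]
    rw [mul_comm]
    linarith
  have hup : ∫ x, u x ∂ν ≤ ε * (ν (Metric.thickening ε B)).toReal := by
    have h1 : ∀ x, u x ≤ (Metric.thickening ε B).indicator (fun _ => ε) x := by
      intro x
      by_cases hx : x ∈ Metric.thickening ε B
      · rw [Set.indicator_of_mem hx]
        apply max_le ?_ εpos.le
        have := Metric.infDist_nonneg (s := B) (x := x)
        linarith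
      · rw [Set.indicator_of_notMem hx]
        rw [Metric.mem_thickening_iff_infDist_lt hBne, not_lt] at hx
        apply max_le (by linarith) le_rfl
    have h2 : ∫ x, u x ∂ν ≤ ∫ x, (Metric.thickening ε B).indicator (fun _ => ε) x ∂ν :=
      integral_mono (BLF.integrable f ν)
        ((integrable_const ε).indicator isOpen_thickening.measurableSet) h1
    have h3 : ∫ x, (Metric.thickening ε B).indicator (fun _ => ε) x ∂ν
        = (ν (Metric.thickening ε B)).toReal * ε := by
      rw [integral_indicator_const ε isOpen_thickening.measurableSet, smul_eq_mul, measureReal_def]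
    rw [mul_comm]
    linarith
  have hDd : DBL μ ν < ε * ε := lt_of_lt_of_le hD (by nlinarith)
  have main : (μ B).toReal ≤ (ν (Metric.thickening ε B)).toReal + ε := by
    nlinarith
  calc μ B = ENNReal.ofReal ((μ B).toReal) := (ENNReal.ofReal_toReal (measure_ne_top _ _)).symm
    _ ≤ ENNReal.ofReal ((ν (Metric.thickening ε B)).toReal + ε) := ENNReal.ofReal_le_ofReal main
    _ = ν (Metric.thickening ε B) + ENNReal.ofReal ε := by
        rw [ENNReal.ofReal_add ENNReal.toReal_nonneg εpos.le,
          ENNReal.ofReal_toReal (measure_ne_top _ _)]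

variable [TopologicalSpace.SeparableSpace M] [BorelSpace M]

/-- The map `μ ↦ DBL(μ, Q)` is continuous on probability measures with the topology of
convergence in distribution. -/
lemma continuous_DBL_eval (Q : Measure M) [IsProbabilityMeasure Q] :
    Continuous fun μ : ProbabilityMeasure M => DBL μ.toMeasure Q := by
  have h1 : Continuous fun ν : LevyProkhorov (ProbabilityMeasure M) =>
      DBL ((LevyProkhorov.toMeasureEquiv (α := ProbabilityMeasure M)) ν).toMeasure Q := by
    apply LipschitzWith.continuous (K := 3)
    apply LipschitzWith.of_dist_le_mul
    intro x y
    set μx := (LevyProkhorov.toMeasureEquiv (α := ProbabilityMeasure M)) x with hμx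
    set μy := (LevyProkhorov.toMeasureEquiv (α := ProbabilityMeasure M)) y with hμy
    have tri1 : DBL μx.toMeasure Q ≤ DBL μx.toMeasure μy.toMeasure + DBL μy.toMeasure Q :=
      DBL_triangle _ _ _
    have tri2 : DBL μy.toMeasure Q ≤ DBL μy.toMeasure μx.toMeasure + DBL μx.toMeasure Q :=
      DBL_triangle _ _ _
    have hsymm : DBL μy.toMeasure μx.toMeasure = DBL μx.toMeasure μy.toMeasure :=
      DBL_comm _ _
    have hle : DBL μx.toMeasure μy.toMeasure ≤ 3 * levyProkhorovDist μx.toMeasure μy.toMeasure :=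
      DBL_le_three_mul_LP _ _
    have hdist : dist x y = levyProkhorovDist μx.toMeasure μy.toMeasure := rfl
    rw [Real.dist_eq, abs_sub_le_iff]
    rw [NNReal.coe_ofNat, hdist]
    constructor <;> linarith
  exact h1.comp LevyProkhorov.continuous_ofMeasure_probabilityMeasure

/-- Any neighborhood of a probability measure in the topology of convergence in
distribution contains a basic neighborhood given by finitely many bounded continuous
test functions. -/
lemma exists_finite_test (Q : ProbabilityMeasure M) {O : Set (ProbabilityMeasure M)}
    (hO : O ∈ 𝓝 Q) :
    ∃ (S : Finset (M →ᵇ ℝ≥0)) (ε : (M →ᵇ ℝ≥0) → ℝ),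
      (∀ f ∈ S, 0 < ε f) ∧
      ∀ μ : ProbabilityMeasure M,
        (∀ f ∈ S, |(∫ x, (f x : ℝ) ∂μ.toMeasure) - ∫ x, (f x : ℝ) ∂Q.toMeasure| < ε f) →
          μ ∈ O := by
  set T : ProbabilityMeasure M → (M →ᵇ ℝ≥0) → ℝ≥0 :=
    fun μ f => μ.toFiniteMeasure.testAgainstNN f with hT
  have h1 : IsInducing (ProbabilityMeasure.toFiniteMeasure :
      ProbabilityMeasure M → FiniteMeasure M) :=
    (ProbabilityMeasure.toFiniteMeasure_isEmbedding M).toIsInducing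
  have h2 : IsInducing (FiniteMeasure.toWeakDualBCNN :
      FiniteMeasure M → WeakDual ℝ≥0 (M →ᵇ ℝ≥0)) := ⟨rfl⟩
  have h3 : IsInducing (fun (φ : WeakDual ℝ≥0 (M →ᵇ ℝ≥0)) (f : M →ᵇ ℝ≥0) => φ f) := ⟨rfl⟩
  have hind : IsInducing T := IsInducing.comp (IsInducing.comp h3 h2) h1
  have hO' : O ∈ Filter.comap T (𝓝 (T Q)) := by
    rw [← hind.nhds_eq_comap Q]; exact hO
  rw [nhds_pi] at hO'
  obtain ⟨s, hs, hsub⟩ := Filter.mem_comap.mp hO'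
  obtain ⟨I, Ifin, t, ht, hIt⟩ := Filter.mem_pi.mp hs
  choose ε hε hballs using fun f => Metric.mem_nhds_iff.mp (ht f)
  have key : ∀ (ρ : ProbabilityMeasure M) (f : M →ᵇ ℝ≥0),
      ((T ρ f : ℝ≥0) : ℝ) = ∫ x, (f x : ℝ) ∂ρ.toMeasure := by
    intro ρ f
    have h4 : ((T ρ f : ℝ≥0) : ℝ) = (∫⁻ x, (f x : ℝ≥0∞) ∂ρ.toMeasure).toReal := rfl
    rw [h4, BoundedContinuousFunction.toReal_lintegral_coe_eq_integral f ρ.toMeasure]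
  refine ⟨Ifin.toFinset, ε, fun f _ => hε f, fun μ hμ => ?_⟩
  apply hsub
  refine hIt (fun f hf => ?_)
  apply hballs f
  rw [Metric.mem_ball, NNReal.dist_eq, key μ f, key Q f]
  exact hμ f (Ifin.mem_toFinset.mpr hf)

end DBLaux

/-- For a sequence of random probability measures `Q̂_k` on a separable metric space and a
fixed probability measure `Q`, the following are equivalent:
(i) `∫ f dQ̂_k → ∫ f dQ` in probability for every bounded continuous `f`;
(ii) `D_BL(Q̂_k, Q) → 0` in probability. -/
theorem weak_convergence_in_probability_iff_DBL
    {M : Type*} [MetricSpace M] [TopologicalSpace.SeparableSpace M]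
    [MeasurableSpace M] [BorelSpace M]
    {Ω : Type*} [MeasurableSpace Ω] {P : Measure Ω} [IsProbabilityMeasure P]
    (Qhat : ℕ → Ω → Measure M)
    (hmeas : ∀ k, Measurable (Qhat k))
    (hprob : ∀ k ω, IsProbabilityMeasure (Qhat k ω))
    (Q : Measure M) [IsProbabilityMeasure Q] :
    (∀ f : BoundedContinuousFunction M ℝ,
        TendstoInMeasure P (fun k ω => ∫ x, f x ∂(Qhat k ω)) atTop
          (fun _ => ∫ x, f x ∂Q))
      ↔ TendstoInMeasure P (fun k ω => DBL (Qhat k ω) Q) atTop (fun _ => (0 : ℝ)) := by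
  classical
  constructor
  · -- (i) → (ii)
    intro H
    rw [tendstoInMeasure_iff_dist]
    intro ε hε
    set Qp : ProbabilityMeasure M := ⟨Q, inferInstance⟩ with hQp
    have hOopen : IsOpen {μ : ProbabilityMeasure M | DBL μ.toMeasure Q < ε} := by
      have := (continuous_DBL_eval (M := M) Q).isOpen_preimage (Set.Iio ε) isOpen_Iio
      exact this
    have hQmem : Qp ∈ {μ : ProbabilityMeasure M | DBL μ.toMeasure Q < ε} := by
      show DBL Q Q < ε
      rw [DBL_self_eq_zero]
      exact hε
    obtain ⟨S, δf, hδf, hS⟩ := exists_finite_test Qp (hOopen.mem_nhds hQmem)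
    have coeIso : Isometry ((↑) : ℝ≥0 → ℝ) := fun _ _ => rfl
    set R : (M →ᵇ ℝ≥0) → BoundedContinuousFunction M ℝ :=
      fun f => BoundedContinuousFunction.comp _ coeIso.lipschitz f with hR
    have keybound : ∀ k, P {ω | ε ≤ dist (DBL (Qhat k ω) Q) 0}
        ≤ ∑ f ∈ S, P {ω | δf f ≤ dist (∫ x, (R f) x ∂(Qhat k ω)) (∫ x, (R f) x ∂Q)} := by
      intro k
      refine le_trans (measure_mono ?_) (measure_biUnion_finset_le _ _)
      intro ω hω
      simp only [Set.mem_setOf_eq] at hω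
      by_contra hcon
      simp only [Set.mem_iUnion, Set.mem_setOf_eq, not_exists, not_le] at hcon
      haveI := hprob k ω
      have hmem : (⟨Qhat k ω, hprob k ω⟩ : ProbabilityMeasure M)
          ∈ {μ : ProbabilityMeasure M | DBL μ.toMeasure Q < ε} := by
        apply hS
        intro f hf
        have h := hcon f hf
        rw [Real.dist_eq] at h
        exact h
      have hDBL : DBL (Qhat k ω) Q < ε := hmem
      rw [Real.dist_0_eq_abs, abs_of_nonneg (DBL_nonneg _ _)] at hω
      linarith
    have hsum : Tendsto (fun k => ∑ f ∈ S,
        P {ω | δf f ≤ dist (∫ x, (R f) x ∂(Qhat k ω)) (∫ x, (R f) x ∂Q)}) atTop (𝓝 0) := by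
      have h0 : (0 : ℝ≥0∞) = ∑ f ∈ S, 0 := by simp
      rw [h0]
      exact tendsto_finset_sum _ (fun f hf => tendstoInMeasure_iff_dist.mp (H (R f)) (δf f) (hδf f hf))
    exact tendsto_of_tendsto_of_tendsto_of_le_of_le tendsto_const_nhds hsum
      (fun k => zero_le) keybound
  · -- (ii) → (i)
    intro H f
    rw [tendstoInMeasure_iff_dist]
    intro ε hε
    have hcontE : Continuous (fun ν : LevyProkhorov (ProbabilityMeasure M) =>
        ∫ x, f x ∂((LevyProkhorov.toMeasureEquiv (α := ProbabilityMeasure M)) ν).toMeasure) := by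
      have h1 : Continuous (fun μ : ProbabilityMeasure M => ∫ x, f x ∂μ.toMeasure) :=
        ProbabilityMeasure.continuous_integral_boundedContinuousFunction f
      exact h1.comp LevyProkhorov.continuous_toMeasure_probabilityMeasure
    set QLP : LevyProkhorov (ProbabilityMeasure M) :=
      (LevyProkhorov.toMeasureEquiv (α := ProbabilityMeasure M)).symm ⟨Q, inferInstance⟩ with hQLP
    obtain ⟨δ, hδpos, hδ⟩ := Metric.continuous_iff.mp hcontE QLP ε hε
    set δ2 : ℝ := min δ 1 / 2 with hδ2
    have hδ2pos : 0 < δ2 := by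
      rw [hδ2]
      have : (0:ℝ) < min δ 1 := lt_min hδpos one_pos
      linarith
    have hδ2le1 : δ2 ≤ 1 := by
      rw [hδ2]
      have : min δ 1 ≤ 1 := min_le_right _ _
      linarith
    have hδ2ltδ : δ2 < δ := by
      rw [hδ2]
      have : min δ 1 ≤ δ := min_le_left _ _
      linarith
    have hsubset : ∀ k, {ω | ε ≤ dist (∫ x, f x ∂(Qhat k ω)) (∫ x, f x ∂Q)}
        ⊆ {ω | δ2 * δ2 ≤ dist (DBL (Qhat k ω) Q) 0} := by
      intro k ω hω
      simp only [Set.mem_setOf_eq] at hω ⊢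
      by_contra hcon
      rw [not_le, Real.dist_0_eq_abs] at hcon
      haveI := hprob k ω
      have hDlt : DBL (Qhat k ω) Q < δ2 * δ2 := lt_of_le_of_lt (le_abs_self _) hcon
      have hLP : levyProkhorovDist (Qhat k ω) Q ≤ δ2 := LP_le_of_DBL_lt _ _ hδ2pos hδ2le1 hDlt
      set xω : LevyProkhorov (ProbabilityMeasure M) :=
        (LevyProkhorov.toMeasureEquiv (α := ProbabilityMeasure M)).symm ⟨Qhat k ω, hprob k ω⟩ with hxω
      have hdist : dist xω QLP = levyProkhorovDist (Qhat k ω) Q := rfl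
      have hlt : dist xω QLP < δ := by
        rw [hdist]; linarith
      have := hδ xω hlt
      have heq1 : (∫ x, f x ∂((LevyProkhorov.toMeasureEquiv (α := ProbabilityMeasure M)) xω).toMeasure)
          = ∫ x, f x ∂(Qhat k ω) := rfl
      have heq2 : (∫ x, f x ∂((LevyProkhorov.toMeasureEquiv (α := ProbabilityMeasure M)) QLP).toMeasure)
          = ∫ x, f x ∂Q := rfl
      rw [heq1, heq2] at this
      linarith
    have hkey := tendstoInMeasure_iff_dist.mp H (δ2 * δ2) (by positivity)
    exact tendsto_of_tendsto_of_tendsto_of_le_of_le tendsto_const_nhds hkey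
      (fun k => zero_le) (fun k => measure_mono (hsubset k))
end
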